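/- For every natural number m ≥ 2, the quantity ω_q(m) := (1/2^m) · max_θ ((1+cos θ)^{m-1} + (1+sin θ)^{m-1}) satisfies ω_q(m) > 1/2 + 1/2^m. -/
import Mathlib


open Real

lemma key_ineq (k : ℕ) (hk : 1 ≤ k) :
    (2 : ℝ) ^ k + 1 <
      (1 + Real.sqrt (1 - (1 / 2 ^ k) ^ 2)) ^ k + (1 + 1 / 2 ^ k) ^ k := by
  set s : ℝ := 1 / 2 ^ k with hs
  have ht : (0 : ℝ) < 2 ^ k := by positivity
  have hs0 : 0 < s := by positivity
  have hst : s * 2 ^ k = 1 := by rw [hs]; field_simp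
  have hs1 : s ≤ 1 := by
    rw [hs]
    rw [div_le_one ht]
    exact one_le_pow₀ (by norm_num)
  have hsq : s ^ 2 ≤ 1 := by nlinarith
  -- sqrt (1 - s^2) ≥ 1 - s^2
  have hsqrt : 1 - s ^ 2 ≤ Real.sqrt (1 - s ^ 2) := by
    have h0 : 0 ≤ 1 - s ^ 2 := by linarith
    nlinarith [Real.sq_sqrt h0, Real.sqrt_nonneg (1 - s ^ 2)]
  -- (1 + sqrt(1-s^2))^k ≥ (2 - s^2)^k
  have hA : (2 - s ^ 2) ^ k ≤ (1 + Real.sqrt (1 - s ^ 2)) ^ k := by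
    apply pow_le_pow_left₀ (by nlinarith)
    linarith
  -- Bernoulli: (2 - s^2)^k = 2^k * (1 - s^2/2)^k ≥ 2^k * (1 - k*s^2/2)
  have hB : (2 : ℝ) ^ k * (1 + k * (-(s ^ 2) / 2)) ≤ (2 - s ^ 2) ^ k := by
    have hb : (1 : ℝ) + k * (-(s ^ 2) / 2) ≤ (1 + -(s ^ 2) / 2) ^ k :=
      one_add_mul_le_pow (by nlinarith) k
    calc (2 : ℝ) ^ k * (1 + k * (-(s ^ 2) / 2))
        ≤ 2 ^ k * (1 + -(s ^ 2) / 2) ^ k := by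
          exact mul_le_mul_of_nonneg_left hb (le_of_lt ht)
      _ = (2 * (1 + -(s ^ 2) / 2)) ^ k := by rw [mul_pow]
      _ = (2 - s ^ 2) ^ k := by ring_nf
  -- Bernoulli: (1 + s)^k ≥ 1 + k*s
  have hC : (1 : ℝ) + k * s ≤ (1 + s) ^ k := one_add_mul_le_pow (by linarith) k
  have hk1 : (1 : ℝ) ≤ (k : ℝ) := by exact_mod_cast hk
  -- 2^k * (k * s^2 / 2) = k * s / 2 using s * 2^k = 1
  have hkey : (2 : ℝ) ^ k * ((k : ℝ) * (s ^ 2) / 2) = (k : ℝ) * s / 2 := by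
    have : (2 : ℝ) ^ k * s ^ 2 = s := by nlinarith
    nlinarith
  nlinarith [mul_pos hs0 (lt_of_lt_of_le one_pos hk1)]

theorem stmt_10 (m : ℕ) (hm : 2 ≤ m) :
    (1 / 2 ^ m : ℝ) * (⨆ θ : ℝ, (1 + cos θ) ^ (m - 1) + (1 + sin θ) ^ (m - 1)) >
      1 / 2 + 1 / 2 ^ m := by
  obtain ⟨n, rfl⟩ : ∃ n, m = n + 2 := ⟨m - 2, by omega⟩
  have hm1 : n + 2 - 1 = n + 1 := rfl
  rw [hm1]
  set k := n + 1 with hk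
  set s : ℝ := 1 / 2 ^ k with hs
  have hs0 : 0 < s := by positivity
  have hs1 : s ≤ 1 := by
    rw [hs, div_le_one (by positivity)]
    exact one_le_pow₀ (by norm_num)
  set f : ℝ → ℝ := fun θ => (1 + cos θ) ^ k + (1 + sin θ) ^ k with hf
  have hbdd : BddAbove (Set.range f) := by
    refine ⟨2 ^ k + 2 ^ k, ?_⟩
    rintro x ⟨θ, rfl⟩
    have h1 : (1 + cos θ) ^ k ≤ 2 ^ k :=
      pow_le_pow_left₀ (by nlinarith [neg_one_le_cos θ]) (by nlinarith [cos_le_one θ]) k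
    have h2 : (1 + sin θ) ^ k ≤ 2 ^ k :=
      pow_le_pow_left₀ (by nlinarith [neg_one_le_sin θ]) (by nlinarith [sin_le_one θ]) k
    simp only [hf]
    linarith
  have hθ : f (Real.arcsin s) ≤ ⨆ θ : ℝ, f θ := le_ciSup hbdd _
  have hval : f (Real.arcsin s) =
      (1 + Real.sqrt (1 - s ^ 2)) ^ k + (1 + s) ^ k := by
    simp only [hf, Real.cos_arcsin, Real.sin_arcsin (by linarith : (-1:ℝ) ≤ s) hs1]
  have hkeyI : (2 : ℝ) ^ k + 1 < f (Real.arcsin s) := by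
    rw [hval]
    exact key_ineq k (by omega)
  have hS : (2 : ℝ) ^ k + 1 < ⨆ θ : ℝ, f θ := lt_of_lt_of_le hkeyI hθ
  have hpos : (0 : ℝ) < 1 / 2 ^ (n + 2) := by positivity
  have heq : (1 / 2 ^ (n + 2) : ℝ) * (2 ^ k + 1) = 1 / 2 + 1 / 2 ^ (n + 2) := by
    rw [hk]
    rw [pow_succ, pow_succ]
    field_simp
  calc (1 / 2 : ℝ) + 1 / 2 ^ (n + 2) = 1 / 2 ^ (n + 2) * (2 ^ k + 1) := heq.symm
    _ < 1 / 2 ^ (n + 2) * (⨆ θ : ℝ, f θ) := by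
        exact mul_lt_mul_of_pos_left hS hpos
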